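/- Let (σ, A, a) be a substitution satisfying condition (C) that projects onto a primitive substitution (τ, B, b), and let σ' be a non-principal sub-substitution of σ. Then the dominant eigenvalue of σ' is strictly smaller than the dominant eigenvalue of τ. -/

import Mathlib

set_option linter.unusedSectionVars false
set_option maxHeartbeats 1000000

/-- Apply a substitution (given on letters) to a word. -/
def Subst.apply {A : Type*} (σ : A → List A) (w : List A) : List A := (w.map σ).flatten

/-- A substitution is primitive if some iterate maps every letter to a word containing
every letter. -/
def Primitive {A : Type*} (σ : A → List A) : Prop :=
  ∃ n : ℕ, 0 < n ∧ ∀ c d : A, d ∈ (Subst.apply σ)^[n] [c]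

/-- Incidence matrix of a substitution. -/
noncomputable def IncMat {A : Type*} [Fintype A] [DecidableEq A] (σ : A → List A) :
    Matrix A A ℝ := Matrix.of fun i j => ((σ j).count i : ℝ)

/-- Incidence matrix of the sub-substitution associated with the component `i` of the
partition `P`: apply `σ`, erase the letters outside the component, and count occurrences. -/
noncomputable def SubIncMat {A : Type*} [Fintype A] [DecidableEq A] {l : ℕ}
    (σ : A → List A) (P : A → Fin l) (i : Fin l) :
    Matrix {x // P x = i} {x // P x = i} ℝ :=
  Matrix.of fun r c => ((((σ c.1).filter (fun x => P x == i)).count r.1 : ℕ) : ℝ)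

/-- `α` is the dominant (Perron) eigenvalue of the real matrix `M`. -/
def IsDomEig {n : Type*} [Fintype n] [DecidableEq n] (M : Matrix n n ℝ) (α : ℝ) : Prop :=
  Module.End.HasEigenvalue (Matrix.toLin' M) α ∧
  ∀ μ : ℂ, Module.End.HasEigenvalue (Matrix.toLin' (M.map Complex.ofReal)) μ →
    ‖μ‖ ≤ α

/-- Condition (C) for a substitution `σ`, with respect to the partition of the alphabet given
by `P : A → Fin l` into primitive components (the principal ones being those of index `≥ q`),
with distinguished starting letters `st i` for each component. -/
def ConditionC {A : Type*} (σ : A → List A) {l : ℕ} (q : ℕ) (P : A → Fin l)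
    (st : Fin l → A) : Prop :=
  q + 1 ≤ l ∧ Function.Surjective P ∧ (∀ c : A, σ c ≠ []) ∧
  (∀ c d : A, d ∈ σ c → P c ≤ P d) ∧
  (∀ i : Fin l, (i : ℕ) < q →
    (∀ c d : A, P c = i → P d = i → d ∉ σ c) ∨ (∀ c d : A, P c = i → P d = i → d ∈ σ c)) ∧
  (∀ i : Fin l, q ≤ (i : ℕ) → ∀ c d : A, P c = i → P d = i → d ∈ σ c) ∧
  (∀ c d : A, q ≤ ((P c) : ℕ) → q ≤ ((P d) : ℕ) → P c ≠ P d → d ∉ σ c) ∧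
  (∀ i : Fin l, (i : ℕ) < q → ∃ c d : A, P c = i ∧ i < P d ∧ d ∈ σ c) ∧
  (∀ i : Fin l, P (st i) = i) ∧
  (∀ i : Fin l, (i : ℕ) < q → (∃ c d : A, P c = i ∧ P d = i ∧ d ∈ σ c) →
    ((σ (st i)).filter (fun x => P x == i)).head? = some (st i)) ∧
  (∀ i : Fin l, q ≤ (i : ℕ) → ∃ u : List A, u ≠ [] ∧ σ (st i) = st i :: u)

namespace Stmt11Aux

open List Finset
open scoped ENNReal NNReal

variable {A : Type*}

/-- the word obtained from letter `c` after `n` steps -/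
def W (σ : A → List A) (n : ℕ) (c : A) : List A := (Subst.apply σ)^[n] [c]

lemma apply_append (σ : A → List A) (u v : List A) :
    Subst.apply σ (u ++ v) = Subst.apply σ u ++ Subst.apply σ v := by
  simp [Subst.apply]

lemma iter_append (σ : A → List A) (n : ℕ) (u v : List A) :
    (Subst.apply σ)^[n] (u ++ v) = (Subst.apply σ)^[n] u ++ (Subst.apply σ)^[n] v := by
  induction n generalizing u v with
  | zero => simp
  | succ n ih => simp [Function.iterate_succ_apply, apply_append, ih]

lemma iter_apply (σ : A → List A) (n : ℕ) (w : List A) :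
    (Subst.apply σ)^[n] w = (w.map (W σ n)).flatten := by
  induction w with
  | nil => simp [show (Subst.apply σ)^[n] [] = [] from by
      induction n with
      | zero => rfl
      | succ n ih => rw [Function.iterate_succ_apply, show Subst.apply σ [] = [] from rfl, ih]]
  | cons c t ih =>
      have : (c :: t) = [c] ++ t := rfl
      rw [this, iter_append, ih]
      simp [W]

lemma apply_singleton (σ : A → List A) (c : A) : Subst.apply σ [c] = σ c := by
  simp [Subst.apply]

lemma W_zero (σ : A → List A) (c : A) : W σ 0 c = [c] := rfl

lemma W_succ (σ : A → List A) (n : ℕ) (c : A) :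
    W σ (n + 1) c = ((σ c).map (W σ n)).flatten := by
  rw [W, Function.iterate_succ_apply, apply_singleton, iter_apply]

lemma W_succ' (σ : A → List A) (n : ℕ) (c : A) :
    W σ (n + 1) c = Subst.apply σ (W σ n c) := Function.iterate_succ_apply' _ n _

lemma length_W_succ (σ : A → List A) (n : ℕ) (c : A) :
    (W σ (n + 1) c).length = ((σ c).map (fun e => (W σ n e).length)).sum := by
  rw [W_succ, length_flatten, List.map_map]; rfl

lemma count_W_succ [DecidableEq A] (σ : A → List A) (n : ℕ) (c d : A) :
    (W σ (n + 1) c).count d = ((σ c).map (fun e => (W σ n e).count d)).sum := by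
  rw [W_succ, count_flatten, List.map_map]; rfl

/-- weighted sum over a list as a sum over the alphabet (real version) -/
lemma list_sum_eq_weighted [Fintype A] [DecidableEq A] (l : List A) (f : A → ℝ) :
    (l.map f).sum = ∑ e : A, (l.count e : ℝ) * f e := by
  induction l with
  | nil => simp
  | cons a t ih =>
      simp only [List.map_cons, List.sum_cons, ih, count_cons, beq_iff_eq]
      have h1 : ∑ e : A, ((t.count e + if a = e then 1 else 0 : ℕ) : ℝ) * f e
          = (∑ e : A, (t.count e : ℝ) * f e) + ∑ e : A, (if a = e then f e else 0) := by
        rw [← Finset.sum_add_distrib]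
        refine Finset.sum_congr rfl fun e _ => ?_
        push_cast
        split_ifs with h <;> ring
      rw [h1, Finset.sum_ite_eq Finset.univ a f]
      simp [add_comm]

lemma length_eq_sum_count [Fintype A] [DecidableEq A] (w : List A) :
    w.length = ∑ e : A, w.count e := by
  induction w with
  | nil => simp
  | cons a t ih =>
      simp only [List.length_cons, ih, count_cons]
      rw [Finset.sum_congr rfl (fun e _ => rfl), Finset.sum_add_distrib]
      simp

lemma incMat_pow [Fintype A] [DecidableEq A] (σ : A → List A) (n : ℕ) (d c : A) :
    (IncMat σ ^ n) d c = ((W σ n c).count d : ℝ) := by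
  induction n generalizing c with
  | zero =>
      rw [pow_zero, Matrix.one_apply, W_zero]
      by_cases h : d = c <;> simp [h, List.count_singleton, eq_comm]
  | succ n ih =>
      rw [pow_succ, Matrix.mul_apply, count_W_succ]
      have : (((σ c).map (fun e => (W σ n e).count d)).sum : ℝ)
          = (((σ c).map (fun e => ((W σ n e).count d : ℝ))).sum) := by
        rw [Nat.cast_list_sum, List.map_map]; rfl
      rw [this, list_sum_eq_weighted]
      refine Finset.sum_congr rfl fun e _ => ?_
      rw [ih, IncMat]
      simp [Matrix.of_apply, mul_comm]

lemma incMat_pow_nonneg [Fintype A] [DecidableEq A] (σ : A → List A) (n : ℕ) (d c : A) :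
    0 ≤ (IncMat σ ^ n) d c := by rw [incMat_pow]; positivity

/-- eigenvalue power bound by total sum of entries of the power -/
lemma eig_pow_le [Fintype A] [DecidableEq A] [Nonempty A] (σ : A → List A) (lam : ℝ)
    (h : Module.End.HasEigenvalue (Matrix.toLin' (IncMat σ)) lam) (k : ℕ) :
    |lam| ^ k ≤ ∑ d : A, ∑ c : A, (IncMat σ ^ k) d c := by
  obtain ⟨v, hv⟩ := h.exists_hasEigenvector
  have hmul : (IncMat σ).mulVec v = lam • v := by
    have := hv.apply_eq_smul
    rwa [Matrix.toLin'_apply] at this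
  have hpow : ∀ k, (IncMat σ ^ k).mulVec v = lam ^ k • v := by
    intro k
    induction k with
    | zero => simp
    | succ k ih =>
        rw [pow_succ', ← Matrix.mulVec_mulVec, ih, Matrix.mulVec_smul, hmul, smul_smul, pow_succ]
  obtain ⟨d, -, hd⟩ := Finset.exists_max_image (Finset.univ : Finset A) (fun x => |v x|)
    Finset.univ_nonempty
  have hd0 : 0 < |v d| := by
    obtain ⟨c0, hc0⟩ := Function.ne_iff.mp hv.right
    calc 0 < |v c0| := abs_pos.mpr (by simpa using hc0)
    _ ≤ |v d| := hd c0 (Finset.mem_univ c0)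
  have key : |lam| ^ k * |v d| ≤ (∑ c : A, (IncMat σ ^ k) d c) * |v d| := by
    have h1 : |lam| ^ k * |v d| = |((IncMat σ ^ k).mulVec v) d| := by
      rw [hpow k]; simp [abs_mul, abs_pow]
    rw [h1, Matrix.mulVec, dotProduct]
    calc |∑ c : A, (IncMat σ ^ k) d c * v c| ≤ ∑ c : A, |(IncMat σ ^ k) d c * v c| :=
          Finset.abs_sum_le_sum_abs _ _
      _ ≤ ∑ c : A, (IncMat σ ^ k) d c * |v d| := by
          refine Finset.sum_le_sum fun c _ => ?_
          rw [abs_mul, abs_of_nonneg (incMat_pow_nonneg σ k d c)]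
          exact mul_le_mul_of_nonneg_left (hd c (Finset.mem_univ c)) (incMat_pow_nonneg σ k d c)
      _ = (∑ c : A, (IncMat σ ^ k) d c) * |v d| := by rw [Finset.sum_mul]
  have h2 : |lam| ^ k ≤ ∑ c : A, (IncMat σ ^ k) d c :=
    le_of_mul_le_mul_right (by simpa using key) hd0
  refine h2.trans ?_
  refine Finset.single_le_sum (f := fun d => ∑ c : A, (IncMat σ ^ k) d c) (fun x _ => ?_)
    (Finset.mem_univ d)
  exact Finset.sum_nonneg fun c _ => incMat_pow_nonneg σ k x c

section Helpers

lemma sum_map_filter_add (l : List A) (p : A → Bool) (f : A → ℕ) :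
    ((l.filter p).map f).sum + ((l.filter fun x => !p x).map f).sum = (l.map f).sum := by
  induction l with
  | nil => simp
  | cons a t ih => cases h : p a <;> simp [List.filter_cons, h, ← ih] <;> omega

lemma list_sum_finset_sum {α : Type*} (L : List α) (s : Finset ℕ) (F : α → ℕ → ℕ) :
    (L.map (fun e => ∑ k ∈ s, F e k)).sum = ∑ k ∈ s, (L.map (fun e => F e k)).sum := by
  induction L with
  | nil => simp
  | cons a t ih => simp [ih, Finset.sum_add_distrib]

lemma pow_one_add_le (δ : ℝ) (h0 : 0 ≤ δ) (h1 : δ ≤ 1) :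
    ∀ k : ℕ, (1+δ)^k ≤ 1 + δ * (2^k - 1) := by
  intro k
  induction k with
  | zero => simp
  | succ k ih =>
      rw [pow_succ]
      have h2 : (1:ℝ) ≤ 2^k := one_le_pow₀ (by norm_num)
      calc (1+δ)^k * (1+δ) ≤ (1 + δ*(2^k-1)) * (1+δ) := by
            refine mul_le_mul_of_nonneg_right ih (by linarith)
        _ = 1 + δ*(2^k - 1) + δ + δ*δ*(2^k-1) := by ring
        _ ≤ 1 + δ*(2^k-1) + δ + δ*(2^k-1) := by
            nlinarith [mul_nonneg (sub_nonneg.mpr h1)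
              (mul_nonneg h0 (by linarith : (0:ℝ) ≤ 2^k - 1))]
        _ = 1 + δ*(2^(k+1) - 1) := by ring

end Helpers

section Psi

variable {B : Type*} (σ : A → List A) (τ : B → List B) (ψ : A → B)
  (hψ : ∀ c : A, List.map ψ (σ c) = τ (ψ c))

include hψ in
lemma map_apply (w : List A) : (Subst.apply σ w).map ψ = Subst.apply τ (w.map ψ) := by
  simp only [Subst.apply, List.map_flatten, List.map_map]
  congr 1
  exact List.map_congr_left fun a _ => hψ a

include hψ in
lemma map_W (n : ℕ) (x : A) : (W σ n x).map ψ = W τ n (ψ x) := by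
  induction n with
  | zero => simp [W]
  | succ n ih =>
      rw [W, Function.iterate_succ_apply', ← W, map_apply σ τ ψ hψ, ih]
      exact (Function.iterate_succ_apply' _ n _).symm

include hψ in
lemma len_W_eq (n : ℕ) (x : A) : (W σ n x).length = (W τ n (ψ x)).length := by
  rw [← map_W σ τ ψ hψ, List.length_map]

end Psi

section Tau

variable {B : Type*} [Fintype B] [DecidableEq B] [Nonempty B] (τ : B → List B)

/-- max length at time n -/
def Gmax (n : ℕ) : ℕ := Finset.univ.sup fun c => (W τ n c).length

/-- min length at time n -/
def Lmin (n : ℕ) : ℕ := Finset.univ.inf' Finset.univ_nonempty fun c => (W τ n c).length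

lemma le_Gmax (n : ℕ) (c : B) : (W τ n c).length ≤ Gmax τ n :=
  Finset.le_sup (f := fun c : B => (W τ n c).length) (Finset.mem_univ c)

lemma Lmin_le (n : ℕ) (c : B) : Lmin τ n ≤ (W τ n c).length :=
  Finset.inf'_le _ (Finset.mem_univ c)

lemma Gmax_zero : Gmax τ 0 = 1 := by
  rw [Gmax]
  have : ∀ c : B, (W τ 0 c).length = 1 := fun c => rfl
  simp only [this]
  exact Finset.sup_const Finset.univ_nonempty 1

variable {τ} {N : ℕ} (hN0 : 0 < N) (hNall : ∀ c d : B, d ∈ (Subst.apply τ)^[N] [c])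

lemma iterate_apply_nil (τ : B → List B) (m : ℕ) : (Subst.apply τ)^[m] [] = [] := by
  induction m with
  | zero => rfl
  | succ m ih => rw [Function.iterate_succ_apply, show Subst.apply τ [] = [] from rfl, ih]

include hN0 hNall in
lemma tau_ne_nil : ∀ e : B, τ e ≠ [] := by
  intro e he
  obtain ⟨m, rfl⟩ := Nat.exists_eq_succ_of_ne_zero hN0.ne'
  have h1 : (Subst.apply τ)^[m + 1] [e] = [] := by
    rw [Function.iterate_succ_apply, show Subst.apply τ [e] = τ e by simp [Subst.apply], he]
    exact iterate_apply_nil τ m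
  have := hNall e e
  rw [h1] at this
  exact absurd this List.not_mem_nil

include hN0 hNall in
lemma W_len_pos : ∀ (n : ℕ) (e : B), 0 < (W τ n e).length := by
  intro n
  induction n with
  | zero => intro e; simp [W]
  | succ n ih =>
      intro e
      rw [length_W_succ]
      obtain ⟨a, t, ht⟩ := List.exists_cons_of_ne_nil (tau_ne_nil hN0 hNall e)
      rw [ht]
      simp only [List.map_cons, List.sum_cons]
      exact lt_of_lt_of_le (ih a) (Nat.le_add_right _ _)

include hNall in
lemma Gmax_le_Lmin (n : ℕ) : Gmax τ n ≤ Lmin τ (n + N) := by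
  refine Finset.le_inf' _ _ fun c _ => ?_
  obtain ⟨cstar, -, hcs⟩ := Finset.exists_mem_eq_sup Finset.univ Finset.univ_nonempty
    (fun c => (W τ n c).length)
  rw [Gmax, hcs]
  have h1 : W τ (n + N) c = ((W τ N c).map (W τ n)).flatten := by
    simp only [W]
    rw [Function.iterate_add_apply, iter_apply]
  rw [h1, List.length_flatten, List.map_map]
  exact List.single_le_sum (by simp) _ (List.mem_map_of_mem (hNall c cstar))

lemma Gmax_lower (b : B) (u : List B) (hu : u ≠ []) (hb : τ b = b :: u)
    (hpos : ∀ (n : ℕ) (e : B), 0 < (W τ n e).length) :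
    ∀ n : ℕ, n + 1 ≤ (W τ n b).length := by
  intro n
  induction n with
  | zero => simp [W]
  | succ n ih =>
      rw [length_W_succ, hb]
      obtain ⟨x, u', rfl⟩ := List.exists_cons_of_ne_nil hu
      simp only [List.map_cons, List.sum_cons]
      have := hpos n x
      omega

end Tau

section Sub

variable {l : ℕ} (σ : A → List A) (P : A → Fin l) (i : Fin l)

/-- the sub-substitution on the subtype -/
def subσ (c : {x // P x = i}) : List {x // P x = i} :=
  ((σ c.1).filter (fun x => P x == i)).attach.map
    (fun e => ⟨e.1, by simpa using (List.mem_filter.mp e.2).2⟩)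

lemma subσ_val (c : {x // P x = i}) :
    (subσ σ P i c).map Subtype.val = (σ c.1).filter (fun x => P x == i) := by
  rw [subσ, List.map_map]
  exact List.attach_map_subtype_val _

lemma mem_subσ (hall : ∀ c e : A, P c = i → P e = i → e ∈ σ c)
    (c e : {x // P x = i}) : e ∈ subσ σ P i c := by
  have h1 : e.1 ∈ (subσ σ P i c).map Subtype.val := by
    rw [subσ_val, List.mem_filter]
    exact ⟨hall _ _ c.2 e.2, by simp [e.2]⟩
  obtain ⟨x, hx, hxe⟩ := List.mem_map.mp h1
  exact Subtype.ext hxe ▸ hx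

lemma subIncMat_eq [Fintype A] [DecidableEq A] :
    SubIncMat σ P i = IncMat (subσ σ P i) := by
  ext r c
  rw [SubIncMat, IncMat]
  simp only [Matrix.of_apply]
  congr 1
  rw [← subσ_val σ P i c]
  rw [List.count_map_of_injective _ Subtype.val Subtype.val_injective r]
  congr 1
  exact lawful_beq_subsingleton _ _

end Sub

section Gelfand

attribute [local instance] Matrix.linftyOpNormedRing Matrix.linftyOpNormedAlgebra

variable {B : Type*} [Fintype B] [DecidableEq B] [Nonempty B]

noncomputable def matCS : CompleteSpace (Matrix B B ℂ) := FiniteDimensional.complete ℂ _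

attribute [local instance] matCS

lemma gelfand_bound (τ : B → List B) (α r : ℝ) (hr0 : 0 < r) (hαr : α < r)
    (hdom : ∀ μ : ℂ, Module.End.HasEigenvalue
      (Matrix.toLin' ((IncMat τ).map Complex.ofReal)) μ → ‖μ‖ ≤ α) :
    ∃ C : ℝ, 1 ≤ C ∧ ∀ n : ℕ, ((Gmax τ n : ℕ) : ℝ) ≤ C * r ^ n := by
  set Mc : Matrix B B ℂ := (IncMat τ).map Complex.ofReal with hMc
  have hsr : spectralRadius ℂ Mc ≤ ENNReal.ofReal α := by
    rw [spectralRadius]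
    refine iSup₂_le fun μ hμ => ?_
    have hev : Module.End.HasEigenvalue (Matrix.toLin' Mc) μ := by
      rw [Module.End.hasEigenvalue_iff_mem_spectrum]
      rw [show Matrix.toLin' Mc = Matrix.toLinAlgEquiv' Mc from rfl]
      rwa [AlgEquiv.spectrum_eq Matrix.toLinAlgEquiv' Mc]
    have habs := hdom μ hev
    calc (‖μ‖₊ : ℝ≥0∞) = ENNReal.ofReal ‖μ‖ := (ofReal_norm μ).symm
      _ ≤ ENNReal.ofReal α := ENNReal.ofReal_le_ofReal habs
  have htend := spectrum.pow_nnnorm_pow_one_div_tendsto_nhds_spectralRadius Mc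
  have hlt : spectralRadius ℂ Mc < ENNReal.ofReal r :=
    lt_of_le_of_lt hsr (by rwa [ENNReal.ofReal_lt_ofReal_iff hr0])
  obtain ⟨n₀, hn₀⟩ := Filter.eventually_atTop.mp (htend.eventually_lt_const hlt)
  have hnorm : ∀ n, max n₀ 1 ≤ n → ‖Mc ^ n‖ ≤ r ^ n := by
    intro n hn
    have hn1 : (1:ℕ) ≤ n := le_trans (le_max_right _ _) hn
    have hx := (hn₀ n (le_trans (le_max_left _ _) hn)).le
    have h1 : ((‖Mc ^ n‖₊ : ℝ≥0∞) ^ (1 / (n:ℝ))) ^ (n:ℝ)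
        ≤ (ENNReal.ofReal r) ^ (n:ℝ) :=
      ENNReal.rpow_le_rpow hx (Nat.cast_nonneg n)
    rw [← ENNReal.rpow_mul, one_div,
      inv_mul_cancel₀ (by exact_mod_cast Nat.one_le_iff_ne_zero.mp hn1),
      ENNReal.rpow_one, ENNReal.rpow_natCast, ← ENNReal.ofReal_pow hr0.le] at h1
    rw [← enorm_eq_nnnorm, ← ofReal_norm] at h1
    exact (ENNReal.ofReal_le_ofReal_iff (by positivity)).mp h1
  have hpowmap : ∀ n : ℕ, Mc ^ n = ((IncMat τ) ^ n).map Complex.ofReal := by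
    intro n
    have e1 : Mc = Complex.ofRealHom.mapMatrix (IncMat τ) := rfl
    rw [e1, ← map_pow, RingHom.mapMatrix_apply]
    rfl
  have hentry : ∀ (n : ℕ) (d c : B), ((IncMat τ ^ n) d c : ℝ) ≤ ‖Mc ^ n‖ := by
    intro n d c
    have h2 : ‖(Mc ^ n) d c‖₊ ≤ ‖Mc ^ n‖₊ := by
      rw [Matrix.linfty_opNNNorm_def]
      calc ‖(Mc ^ n) d c‖₊ ≤ ∑ j : B, ‖(Mc ^ n) d j‖₊ :=
            Finset.single_le_sum (f := fun j => ‖(Mc ^ n) d j‖₊) (fun _ _ => by positivity)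
              (Finset.mem_univ c)
        _ ≤ Finset.univ.sup fun i : B => ∑ j : B, ‖(Mc ^ n) i j‖₊ :=
            Finset.le_sup (f := fun i : B => ∑ j : B, ‖(Mc ^ n) i j‖₊) (Finset.mem_univ d)
    have h3 : ‖(Mc ^ n) d c‖ = |(IncMat τ ^ n) d c| := by
      rw [hpowmap n]
      simp [Matrix.map_apply, Complex.norm_real, Real.norm_eq_abs]
    have h4 : ‖(Mc ^ n) d c‖ ≤ ‖Mc ^ n‖ := h2
    rw [h3] at h4
    exact le_trans (le_abs_self _) h4
  have hG : ∀ n : ℕ, ((Gmax τ n : ℕ) : ℝ) ≤ (Fintype.card B : ℝ) * ‖Mc ^ n‖ := by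
    intro n
    obtain ⟨cs, -, hcs⟩ := Finset.exists_mem_eq_sup (Finset.univ : Finset B)
      Finset.univ_nonempty (fun c => (W τ n c).length)
    rw [Gmax, hcs, length_eq_sum_count]
    push_cast
    calc ∑ d : B, ((W τ n cs).count d : ℝ) = ∑ d : B, (IncMat τ ^ n) d cs := by
          refine Finset.sum_congr rfl fun d _ => (incMat_pow τ n d cs).symm
      _ ≤ ∑ _d : B, ‖Mc ^ n‖ := Finset.sum_le_sum fun d _ => hentry n d cs
      _ = (Fintype.card B : ℝ) * ‖Mc ^ n‖ := by
          rw [Finset.sum_const, Finset.card_univ, nsmul_eq_mul]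
  set n₁ := max n₀ 1 with hn₁
  refine ⟨(Fintype.card B : ℝ) + (∑ j ∈ Finset.range n₁, ((Gmax τ j : ℕ) : ℝ) / r ^ j) + 1,
    ?_, ?_⟩
  · have h5 : (0:ℝ) ≤ (Fintype.card B : ℝ) := by positivity
    have h6 : (0:ℝ) ≤ ∑ j ∈ Finset.range n₁, ((Gmax τ j : ℕ) : ℝ) / r ^ j :=
      Finset.sum_nonneg fun j _ => by positivity
    linarith
  · intro n
    have h6 : (0:ℝ) ≤ ∑ j ∈ Finset.range n₁, ((Gmax τ j : ℕ) : ℝ) / r ^ j :=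
      Finset.sum_nonneg fun j _ => by positivity
    by_cases hcase : n₁ ≤ n
    · calc ((Gmax τ n : ℕ) : ℝ) ≤ (Fintype.card B : ℝ) * ‖Mc ^ n‖ := hG n
        _ ≤ (Fintype.card B : ℝ) * r ^ n :=
          mul_le_mul_of_nonneg_left (hnorm n hcase) (by positivity)
        _ ≤ _ := by
          have : (0:ℝ) ≤ r ^ n := by positivity
          nlinarith
    · push_neg at hcase
      have hterm : ((Gmax τ n : ℕ) : ℝ) / r ^ n
          ≤ ∑ j ∈ Finset.range n₁, ((Gmax τ j : ℕ) : ℝ) / r ^ j :=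
        Finset.single_le_sum (f := fun j => ((Gmax τ j : ℕ) : ℝ) / r ^ j)
          (fun j _ => by positivity) (Finset.mem_range.mpr hcase)
      have hrn : (0:ℝ) < r ^ n := by positivity
      have := mul_le_mul_of_nonneg_right hterm hrn.le
      rw [div_mul_cancel₀ _ hrn.ne'] at this
      have h5 : (0:ℝ) ≤ (Fintype.card B : ℝ) := by positivity
      nlinarith

end Gelfand

section Ssum

variable {B : Type*} [Fintype B] [DecidableEq B] [Nonempty B]

/-- partial sums of normalized lengths -/
noncomputable def Ssum (τ : B → List B) (α : ℝ) (M : ℕ) : ℝ :=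
  ∑ j ∈ Finset.range (M + 1), ((Gmax τ j : ℕ) : ℝ) / α ^ j

lemma Ssum_succ (τ : B → List B) (α : ℝ) (M : ℕ) :
    Ssum τ α (M + 1) = Ssum τ α M + ((Gmax τ (M + 1) : ℕ) : ℝ) / α ^ (M + 1) := by
  rw [Ssum, Ssum, Finset.sum_range_succ]

end Ssum

end Stmt11Aux

theorem stmt11 {A B : Type*} [Fintype A] [DecidableEq A] [Fintype B] [DecidableEq B]
    (σ : A → List A) (τ : B → List B) (a : A) (b : B)
    {l : ℕ} (q : ℕ) (P : A → Fin l) (st : Fin l → A)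
    (hC : ConditionC σ q P st)
    (hσa : ∃ u : List A, u ≠ [] ∧ σ a = a :: u) (hτb : ∃ u : List B, u ≠ [] ∧ τ b = b :: u)
    -- σ projects onto the primitive substitution τ via the letter-to-letter morphism ψ
    (ψ : A → B) (hψa : ψ a = b) (hψ : ∀ c : A, List.map ψ (σ c) = τ (ψ c))
    (hτprim : Primitive τ)
    -- σ' : the non-principal sub-substitution associated with a non-principal component i
    (i : Fin l) (hi : (i : ℕ) < q)
    -- whose diagonal block is nonzero
    (hMi : ∃ c d : A, P c = i ∧ P d = i ∧ d ∈ σ c)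
    -- and different from the 1×1 matrix [1]
    (hMi1 : ¬ (Fintype.card {x // P x = i} = 1 ∧
      ∀ r c : {x // P x = i}, SubIncMat σ P i r c = 1))
    (α β : ℝ) (hα : IsDomEig (IncMat τ) α) (hβ : IsDomEig (SubIncMat σ P i) β) :
    β < α := by
  classical
  open Stmt11Aux in
  haveI : Nonempty B := ⟨b⟩
  obtain ⟨hql, hPsurj, hσne, hmono, hdich, hprinc, hsep, hesc, hPst, hhead, hstp⟩ := hC
  obtain ⟨N, hN0, hNall⟩ := hτprim
  obtain ⟨u, hu, hbu⟩ := hτb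
  -- the diagonal block of component i is strictly positive
  have hall : ∀ c e : A, P c = i → P e = i → e ∈ σ c := by
    rcases hdich i hi with h | h
    · obtain ⟨cm, dm, hcm, hdm, hdmem⟩ := hMi
      exact absurd hdmem (h cm dm hcm hdm)
    · exact h
  obtain ⟨c0, d0, hc0, hd0, hd0mem⟩ := hesc i hi
  haveI : Nonempty {x // P x = i} := ⟨⟨c0, hc0⟩⟩
  set σ' : {x // P x = i} → List {x // P x = i} := subσ σ P i with hσ'def
  set c0' : {x // P x = i} := ⟨c0, hc0⟩ with hc0'def
  have hmem : ∀ c e : {x // P x = i}, e ∈ σ' c := mem_subσ σ P i hall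
  -- τ facts
  have hWpos := W_len_pos hN0 hNall
  have hψlen : ∀ (n : ℕ) (x : A), (W σ n x).length = (W τ n (ψ x)).length :=
    len_W_eq σ τ ψ hψ
  have hGlow : ∀ n : ℕ, n + 1 ≤ Gmax τ n := fun n =>
    le_trans (Gmax_lower b u hu hbu hWpos n) (le_Gmax τ n b)
  -- α ≥ 1
  have hα1 : 1 ≤ α := by
    by_contra hcon1
    push_neg at hcon1
    have hr0 : (0:ℝ) < max (1/2) ((α+1)/2) := lt_max_of_lt_left one_half_pos
    have hαr : α < max (1/2) ((α+1)/2) := lt_max_of_lt_right (by linarith)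
    have hrlt1 : max (1/2) ((α+1)/2) < 1 := max_lt (by norm_num) (by linarith)
    obtain ⟨C, hC1, hCb⟩ := gelfand_bound τ α _ hr0 hαr hα.2
    obtain ⟨n, hn⟩ := exists_nat_gt C
    have h1 : ((n:ℝ) + 1) ≤ C * (max (1/2) ((α+1)/2)) ^ n := by
      refine le_trans ?_ (hCb n)
      exact_mod_cast hGlow n
    have h2 : (max (1/2) ((α+1)/2)) ^ n ≤ 1 := pow_le_one₀ hr0.le hrlt1.le
    nlinarith
  have hα0 : (0:ℝ) < α := by linarith
  by_contra hfin
  push_neg at hfin  -- hfin : α ≤ β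
  have hβ1 : 1 ≤ β := le_trans hα1 hfin
  -- β power bound via eigenvector
  have hβeig : Module.End.HasEigenvalue (Matrix.toLin' (IncMat σ')) β := by
    have h := hβ.1
    rwa [subIncMat_eq σ P i] at h
  have hm1 : 1 ≤ Fintype.card {x // P x = i} := Fintype.card_pos
  have hβpow : ∀ k : ℕ, β ^ k ≤ (Fintype.card {x // P x = i} : ℝ) * (Gmax σ' k : ℝ) := by
    intro k
    have h1 := eig_pow_le σ' β hβeig k
    rw [abs_of_nonneg (by linarith : (0:ℝ) ≤ β)] at h1
    refine h1.trans ?_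
    refine Finset.sum_comm.trans_le ?_
    have h2 : ∀ c : {x // P x = i}, ∑ d : {x // P x = i}, (IncMat σ' ^ k) d c
        = ((W σ' k c).length : ℝ) := by
      intro c
      rw [length_eq_sum_count (W σ' k c)]
      push_cast
      exact Finset.sum_congr rfl fun d _ => incMat_pow σ' k d c
    calc ∑ c : {x // P x = i}, ∑ d : {x // P x = i}, (IncMat σ' ^ k) d c
        = ∑ c : {x // P x = i}, ((W σ' k c).length : ℝ) :=
          Finset.sum_congr rfl fun c _ => h2 c
      _ ≤ ∑ _c : {x // P x = i}, (Gmax σ' k : ℝ) := by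
          refine Finset.sum_le_sum fun c _ => ?_
          exact_mod_cast le_Gmax σ' k c
      _ = (Fintype.card {x // P x = i} : ℝ) * (Gmax σ' k : ℝ) := by
          rw [Finset.sum_const, Finset.card_univ, nsmul_eq_mul]
  -- lengths of the sub-substitution words are monotone in a strong sense
  have hfmono : ∀ (n : ℕ) (c c' : {x // P x = i}),
      (W σ' n c').length ≤ (W σ' (n+1) c).length := by
    intro n c c'
    rw [length_W_succ]
    exact List.single_le_sum (by simp) _ (List.mem_map_of_mem (hmem c c'))
  have hFle : ∀ (n : ℕ) (c : {x // P x = i}), Gmax σ' n ≤ (W σ' (n+1) c).length := by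
    intro n c
    obtain ⟨cs, -, hcs⟩ := Finset.exists_mem_eq_sup (Finset.univ) Finset.univ_nonempty
      (fun c => (W σ' n c).length)
    rw [Gmax, hcs]
    exact hfmono n c cs
  -- counts of c0' dominate lengths one step earlier
  have hcnt : ∀ (k : ℕ) (c : {x // P x = i}),
      (W σ' k c).length ≤ (W σ' (k+1) c).count c0' := by
    intro k c
    rw [W_succ' σ' k c,
      show Subst.apply σ' (W σ' k c) = ((W σ' k c).map σ').flatten from rfl,
      List.count_flatten, List.map_map]
    have h1 : ∀ x ∈ (W σ' k c).map (fun e => (σ' e).count c0'), 1 ≤ x := by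
      intro x hx
      obtain ⟨e, -, rfl⟩ := List.mem_map.mp hx
      exact List.count_pos_iff.mpr (hmem e c0')
    have h2 := List.length_le_sum_of_one_le _ h1
    rw [List.length_map] at h2
    exact h2
  -- THE MAIN COMBINATORIAL INEQUALITY
  have hmain : ∀ (n : ℕ) (c : {x // P x = i}),
      (∑ k ∈ Finset.range n, (W σ' k c).count c0' * Lmin τ (n - 1 - k))
        ≤ (W σ n c.1).length := by
    intro n
    induction n with
    | zero => intro c; simp
    | succ n ih =>
        intro c
        have hlen : (W σ (n+1) c.1).length
            = ((σ c.1).map (fun e => (W σ n e).length)).sum := length_W_succ σ n c.1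
        have hsplit := sum_map_filter_add (σ c.1) (fun x => P x == i)
          (fun e => (W σ n e).length)
        have hval : ((σ c.1).filter (fun x => P x == i)).map (fun e => (W σ n e).length)
            = (σ' c).map (fun e => (W σ n e.1).length) := by
          rw [← subσ_val σ P i c, List.map_map]
          rfl
        have hpart1 : ∑ k ∈ Finset.range n, (W σ' (k+1) c).count c0' * Lmin τ (n - 1 - k)
            ≤ (((σ c.1).filter (fun x => P x == i)).map (fun e => (W σ n e).length)).sum := by
          rw [hval]
          calc ∑ k ∈ Finset.range n, (W σ' (k+1) c).count c0' * Lmin τ (n-1-k)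
              = ∑ k ∈ Finset.range n,
                  ((σ' c).map (fun e => (W σ' k e).count c0' * Lmin τ (n-1-k))).sum := by
                refine Finset.sum_congr rfl fun k _ => ?_
                rw [show (W σ' (k+1) c).count c0' = ((σ' c).map (fun e => (W σ' k e).count c0')).sum from by
                  rw [W_succ, List.count_flatten, List.map_map]; rfl]
                exact (List.sum_map_mul_right _ _ _).symm
            _ = ((σ' c).map
                  (fun e => ∑ k ∈ Finset.range n, (W σ' k e).count c0' * Lmin τ (n-1-k))).sum :=
                (list_sum_finset_sum _ _ _).symm
            _ ≤ ((σ' c).map (fun e => (W σ n e.1).length)).sum :=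
                List.sum_le_sum fun e _ => ih e
        have hpart2 : (W σ' 0 c).count c0' * Lmin τ n
            ≤ (((σ c.1).filter (fun x => !(P x == i))).map
                (fun e => (W σ n e).length)).sum := by
          by_cases hcc : c = c0'
          · have hc0cnt : (W σ' 0 c).count c0' = 1 := by
              rw [show W σ' 0 c = [c] from rfl, hcc]
              simp
            rw [hc0cnt, one_mul]
            have hceq : (c.1 : A) = c0 := by rw [hcc]
            have hd0f : d0 ∈ (σ c.1).filter (fun x => !(P x == i)) := by
              rw [List.mem_filter, hceq]
              constructor
              · exact hd0mem
              · simp only [Bool.not_eq_true', beq_eq_false_iff_ne, ne_eq]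
                exact fun h => absurd h (ne_of_gt hd0)
            have hlb : Lmin τ n ≤ (W σ n d0).length := by
              rw [hψlen n d0]
              exact Lmin_le τ n (ψ d0)
            exact le_trans hlb
              (List.single_le_sum (by simp) _ (List.mem_map_of_mem hd0f))
          · have hz : (W σ' 0 c).count c0' = 0 := by
              rw [show W σ' 0 c = [c] from rfl]
              refine List.count_eq_zero.mpr ?_
              simp only [List.mem_singleton]
              exact fun h => hcc h.symm
            simp [hz]
        have hgoal : ∑ k ∈ Finset.range (n+1), (W σ' k c).count c0' * Lmin τ (n + 1 - 1 - k)
            = (∑ k ∈ Finset.range n, (W σ' (k+1) c).count c0' * Lmin τ (n - 1 - k))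
              + (W σ' 0 c).count c0' * Lmin τ n := by
          rw [Finset.sum_range_succ']
          congr 1
          refine Finset.sum_congr rfl fun k hk => ?_
          rw [show n + 1 - 1 - (k+1) = n - 1 - k from by omega]
        rw [hgoal, hlen, ← hsplit]
        exact Nat.add_le_add hpart1 hpart2
  -- THE KEY REAL INEQUALITY
  have hkeyM : ∀ M : ℕ, ∑ j ∈ Finset.range (M+1), α^(M-j) * ((Gmax τ j : ℕ) : ℝ)
      ≤ (Fintype.card {x // P x = i} : ℝ) * ((Gmax τ (M+N+3) : ℕ) : ℝ) := by
    intro M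
    have hstep1 : ∀ j ∈ Finset.range (M+1), α^(M-j) * ((Gmax τ j : ℕ) : ℝ)
        ≤ (Fintype.card {x // P x = i} : ℝ)
          * (((W σ' (M+2-j) c0').count c0' * Lmin τ (N+j) : ℕ) : ℝ) := by
      intro j hj
      have hjM : j ≤ M := Nat.lt_succ_iff.mp (Finset.mem_range.mp hj)
      have h1 : α^(M-j) ≤ β^(M-j) := pow_le_pow_left₀ hα0.le hfin _
      have h2 : β^(M-j) ≤ (Fintype.card {x // P x = i} : ℝ) * (Gmax σ' (M-j) : ℝ) := hβpow _
      have h3 : Gmax σ' (M-j) ≤ (W σ' (M-j+1) c0').length := hFle _ _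
      have h4 : (W σ' (M-j+1) c0').length ≤ (W σ' (M-j+1+1) c0').count c0' := hcnt _ _
      have h5 : M-j+1+1 = M+2-j := by omega
      have h6 : α^(M-j) ≤ (Fintype.card {x // P x = i} : ℝ)
          * (((W σ' (M+2-j) c0').count c0' : ℕ) : ℝ) := by
        rw [← h5]
        refine (h1.trans h2).trans ?_
        refine mul_le_mul_of_nonneg_left ?_ (by positivity)
        exact_mod_cast h3.trans h4
      have h7 : ((Gmax τ j : ℕ) : ℝ) ≤ ((Lmin τ (N+j) : ℕ) : ℝ) := by
        have h8 := Gmax_le_Lmin hNall j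
        rw [show N + j = j + N from by omega]
        exact_mod_cast h8
      have h9 : (0:ℝ) ≤ ((Gmax τ j : ℕ) : ℝ) := by positivity
      have h10 : (0:ℝ) ≤ (Fintype.card {x // P x = i} : ℝ)
          * (((W σ' (M+2-j) c0').count c0' : ℕ) : ℝ) := by positivity
      push_cast
      push_cast at h6 h7
      nlinarith [mul_le_mul h6 h7 h9 h10]
    have hstep1' := Finset.sum_le_sum hstep1
    refine hstep1'.trans ?_
    rw [← Finset.mul_sum]
    refine mul_le_mul_of_nonneg_left ?_ (by positivity)
    -- reindex the sum and bound it by the main inequality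
    have hre : (∑ j ∈ Finset.range (M+1), (W σ' (M+2-j) c0').count c0' * Lmin τ (N+j))
        ≤ ∑ k ∈ Finset.range (M+N+3), (W σ' k c0').count c0' * Lmin τ ((M+N+3) - 1 - k) := by
      have hinj : ∀ x ∈ Finset.range (M+1), ∀ y ∈ Finset.range (M+1),
          M+2-x = M+2-y → x = y := by
        intro x hx y hy hxy
        have hx' := Finset.mem_range.mp hx
        have hy' := Finset.mem_range.mp hy
        omega
      have he1 : ∀ j ∈ Finset.range (M+1),
          (W σ' (M+2-j) c0').count c0' * Lmin τ (N+j)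
          = (fun k => (W σ' k c0').count c0' * Lmin τ ((M+N+3) - 1 - k)) (M+2-j) := by
        intro j hj
        have hjM : j ≤ M := Nat.lt_succ_iff.mp (Finset.mem_range.mp hj)
        simp only
        rw [show (M+N+3) - 1 - (M+2-j) = N+j from by omega]
      calc ∑ j ∈ Finset.range (M+1), (W σ' (M+2-j) c0').count c0' * Lmin τ (N+j)
          = ∑ j ∈ Finset.range (M+1),
              (fun k => (W σ' k c0').count c0' * Lmin τ ((M+N+3) - 1 - k)) (M+2-j) :=
            Finset.sum_congr rfl he1
        _ = ∑ k ∈ (Finset.range (M+1)).image (fun j => M+2-j),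
              (W σ' k c0').count c0' * Lmin τ ((M+N+3) - 1 - k) :=
            (Finset.sum_image (g := fun j => M+2-j)
              (f := fun k => (W σ' k c0').count c0' * Lmin τ ((M+N+3) - 1 - k)) hinj).symm
        _ ≤ ∑ k ∈ Finset.range (M+N+3),
              (W σ' k c0').count c0' * Lmin τ ((M+N+3) - 1 - k) := by
            refine Finset.sum_le_sum_of_subset ?_
            intro x hx
            obtain ⟨j, hj, rfl⟩ := Finset.mem_image.mp hx
            have := Finset.mem_range.mp hj
            exact Finset.mem_range.mpr (by omega)
    have hmb : (∑ k ∈ Finset.range (M+N+3),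
        (W σ' k c0').count c0' * Lmin τ ((M+N+3) - 1 - k)) ≤ Gmax τ (M+N+3) := by
      have h11 := hmain (M+N+3) c0'
      rw [hψlen (M+N+3) c0'.1] at h11
      exact h11.trans (le_Gmax τ (M+N+3) (ψ c0'.1))
    exact_mod_cast hre.trans hmb
  -- recursion for the partial sums
  have hhpos : ∀ j : ℕ, (0:ℝ) < ((Gmax τ j : ℕ) : ℝ)/α^j := by
    intro j
    have := hGlow j
    refine div_pos ?_ (by positivity)
    exact_mod_cast lt_of_lt_of_le (Nat.succ_pos j) this
  have hSmono : ∀ (M M' : ℕ), M ≤ M' → Ssum τ α M ≤ Ssum τ α M' := by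
    intro M M' h
    refine Finset.sum_le_sum_of_subset_of_nonneg
      (Finset.range_subset_range.mpr (by omega)) (fun j _ _ => (hhpos j).le)
  have hS0 : Ssum τ α 0 = 1 := by
    rw [Ssum]
    simp [Gmax_zero]
  have hS1 : ∀ M, 1 ≤ Ssum τ α M := fun M => hS0 ▸ hSmono 0 M (Nat.zero_le M)
  have hcard0 : (0:ℝ) < (Fintype.card {x // P x = i} : ℝ) := by positivity
  set ε : ℝ := 1/((Fintype.card {x // P x = i} : ℝ) * α^(N+3)) with hεdef
  have hε0 : 0 < ε := by
    rw [hεdef]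
    positivity
  have hrec : ∀ M, ε * Ssum τ α M ≤ ((Gmax τ (M+N+3) : ℕ) : ℝ)/α^(M+N+3) := by
    intro M
    have h1 := hkeyM M
    have h2 : ∑ j ∈ Finset.range (M+1), α^(M-j) * ((Gmax τ j : ℕ) : ℝ)
        = α^M * Ssum τ α M := by
      rw [Ssum, Finset.mul_sum]
      refine Finset.sum_congr rfl fun j hj => ?_
      have hjM : j ≤ M := Nat.lt_succ_iff.mp (Finset.mem_range.mp hj)
      have h3 : α^(M-j) = α^M / α^j := by
        rw [eq_div_iff (by positivity), ← pow_add, Nat.sub_add_cancel hjM]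
      rw [h3]
      ring
    rw [h2] at h1
    have h4 : α^(M+N+3) = α^M * α^(N+3) := by
      rw [show M+N+3 = M+(N+3) from by omega, pow_add]
    rw [show ε * Ssum τ α M
        = Ssum τ α M / ((Fintype.card {x // P x = i} : ℝ) * α^(N+3)) from by
      rw [hεdef]; ring]
    rw [div_le_div_iff₀ (by positivity) (by positivity)]
    calc Ssum τ α M * α^(M+N+3) = (α^M * Ssum τ α M) * α^(N+3) := by rw [h4]; ring
      _ ≤ ((Fintype.card {x // P x = i} : ℝ) * ((Gmax τ (M+N+3) : ℕ) : ℝ)) * α^(N+3) :=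
          mul_le_mul_of_nonneg_right h1 (by positivity)
      _ = ((Gmax τ (M+N+3) : ℕ) : ℝ) * ((Fintype.card {x // P x = i} : ℝ) * α^(N+3)) := by
          ring
  have hgrow : ∀ M, (1+ε) * Ssum τ α M ≤ Ssum τ α (M+(N+4)) := by
    intro M
    have h1 : Ssum τ α (M+(N+4)) = Ssum τ α (M+N+3) + ((Gmax τ (M+N+4) : ℕ) : ℝ)/α^(M+N+4) := by
      rw [show M+(N+4) = (M+N+3)+1 from by omega, Ssum_succ]
    have h2 : ε * Ssum τ α (M+1) ≤ ((Gmax τ (M+N+4) : ℕ) : ℝ)/α^(M+N+4) := by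
      have h := hrec (M+1)
      rw [show M+1+N+3 = M+N+4 from by omega] at h
      exact h
    have h3 : Ssum τ α M ≤ Ssum τ α (M+N+3) := hSmono _ _ (by omega)
    have h4 : Ssum τ α M ≤ Ssum τ α (M+1) := hSmono _ _ (by omega)
    have h5 : ε * Ssum τ α M ≤ ε * Ssum τ α (M+1) :=
      mul_le_mul_of_nonneg_left h4 hε0.le
    have h6 : (1+ε) * Ssum τ α M = Ssum τ α M + ε * Ssum τ α M := by ring
    rw [h6, h1]
    linarith
  have hiter : ∀ k : ℕ, (1+ε)^k ≤ Ssum τ α ((N+4)*k) := by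
    intro k
    induction k with
    | zero => simpa using hS1 0
    | succ k ih =>
        rw [show (N+4)*(k+1) = (N+4)*k + (N+4) from by ring, pow_succ]
        calc (1+ε)^k * (1+ε) = (1+ε) * (1+ε)^k := by ring
          _ ≤ (1+ε) * Ssum τ α ((N+4)*k) :=
              mul_le_mul_of_nonneg_left ih (by linarith)
          _ ≤ Ssum τ α ((N+4)*k + (N+4)) := hgrow _
  -- geometric upper bound on the partial sums
  set δ : ℝ := min 1 (ε / 2^(N+4)) with hδdef
  have hδ0 : 0 < δ := lt_min one_pos (by positivity)
  have hδ1 : δ ≤ 1 := min_le_left _ _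
  have hδ2 : δ ≤ ε / 2^(N+4) := min_le_right _ _
  have hqlt : (1+δ)^(N+4) < 1 + ε := by
    refine lt_of_le_of_lt (pow_one_add_le δ hδ0.le hδ1 (N+4)) ?_
    have hT : (0:ℝ) < 2^(N+4) := by positivity
    have hT1 : (1:ℝ) ≤ 2^(N+4) := one_le_pow₀ (by norm_num)
    have h1 : δ * (2^(N+4) - 1) ≤ (ε / 2^(N+4)) * (2^(N+4) - 1) :=
      mul_le_mul_of_nonneg_right hδ2 (by linarith)
    have h2 : (ε / 2^(N+4)) * (2^(N+4) - 1) = ε - ε/2^(N+4) := by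
      field_simp
    have h3 : 0 < ε/2^(N+4) := by positivity
    linarith
  have hq1 : 1 < 1 + δ := by linarith
  have hq0 : (0:ℝ) < 1 + δ := by linarith
  have hr0 : (0:ℝ) < α * (1+δ) := by positivity
  have hαr : α < α * (1+δ) := lt_mul_of_one_lt_right hα0 hq1
  obtain ⟨C, hC1, hCb⟩ := gelfand_bound τ α (α*(1+δ)) hr0 hαr hα.2
  have hup : ∀ j : ℕ, ((Gmax τ j : ℕ) : ℝ)/α^j ≤ C * (1+δ)^j := by
    intro j
    rw [div_le_iff₀ (by positivity)]
    calc ((Gmax τ j : ℕ) : ℝ) ≤ C * (α*(1+δ))^j := hCb j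
      _ = C * (1+δ)^j * α^j := by rw [mul_pow]; ring
  have hSup : ∀ M : ℕ, Ssum τ α M ≤ C * (1+δ)^(M+1)/δ := by
    intro M
    calc Ssum τ α M ≤ ∑ j ∈ Finset.range (M+1), C * (1+δ)^j :=
          Finset.sum_le_sum fun j _ => hup j
      _ = C * (((1+δ)^(M+1) - 1)/(1+δ-1)) := by
          rw [← Finset.mul_sum, geom_sum_eq (by linarith : (1:ℝ)+δ ≠ 1)]
      _ ≤ C * ((1+δ)^(M+1)/δ) := by
          have h1 : (1+δ)^(M+1) - 1 ≤ (1+δ)^(M+1) := by linarith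
          have h2 : ((1+δ)^(M+1) - 1)/(1+δ-1) ≤ (1+δ)^(M+1)/δ := by
            rw [show (1:ℝ)+δ-1 = δ from by ring]
            gcongr
          exact mul_le_mul_of_nonneg_left h2 (by linarith)
      _ = C * (1+δ)^(M+1)/δ := by ring
  -- final contradiction
  have hfin2 : ∀ k : ℕ, (1+ε)^k ≤ (C*(1+δ)/δ) * ((1+δ)^(N+4))^k := by
    intro k
    refine (hiter k).trans ((hSup ((N+4)*k)).trans (le_of_eq ?_))
    have e1 : (1+δ)^((N+4)*k+1) = ((1+δ)^(N+4))^k * (1+δ) := by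
      rw [pow_succ, pow_mul]
    rw [e1]
    ring
  -- final contradiction via Bernoulli
  have hC0 : (0:ℝ) < C := by linarith
  have hD0 : (0:ℝ) < C*(1+δ)/δ := by positivity
  have hQ0 : (0:ℝ) < (1+δ)^(N+4) := by positivity
  set t : ℝ := (1+ε)/((1+δ)^(N+4)) with htdef
  have ht1 : (1:ℝ) < t := (one_lt_div hQ0).mpr hqlt
  have htD : ∀ k : ℕ, t^k ≤ C*(1+δ)/δ := by
    intro k
    rw [htdef, div_pow, div_le_iff₀ (by positivity)]
    exact hfin2 k
  obtain ⟨k, hk⟩ := exists_nat_gt ((C*(1+δ)/δ - 1)/(t-1))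
  have ht0 : (0:ℝ) < t - 1 := by linarith
  have hb1 : 1 + (k:ℝ)*(t-1) ≤ t^k := by
    have h := one_add_mul_le_pow (a := t-1) (by linarith) k
    rwa [show 1+(t-1) = t from by ring] at h
  have hklt : (C*(1+δ)/δ - 1) < (k:ℝ)*(t-1) := by
    have := (div_lt_iff₀ ht0).mp hk
    linarith
  linarith [htD k, hb1]
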